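/- Let 0 < ϱ < 1, and let Φ, Φ̃, w : [0,∞) → ℝ be measurable with ϱ ≤ e^{Φ(y)} ≤ ϱ⁻¹, ϱ ≤ e^{Φ̃(y)} ≤ ϱ⁻¹ and w(y) ≥ ϱ for ν-a.e. y, and ∫ w(y)y² dν(y) < ∞. Then | inf_{u≥0} G̃(u,w,Φ) − inf_{u≥0} G̃(u,w,Φ̃) | ≤ 2∫ |e^{Φ(y)} − e^{Φ̃(y)}| λ dν(y) ≤ 2ϱ⁻¹ ∫ |Φ(y) − Φ̃(y)| λ dν(y). -/

import Mathlib

open MeasureTheory Real Set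

/-- `G̃(u,w,Φ) := ∫ [e^{Φ(y)}·(((1−uy)⁺)² − 1) + w(y)·((1−uy)⁻)²] λ dν(y) + 2u(b+λb_Y)`. -/
noncomputable def Gt (ν : Measure ℝ) (lam b : ℝ) (w Φ : ℝ → ℝ) (u : ℝ) : ℝ :=
  lam * ∫ y, (Real.exp (Φ y) * ((max (1 - u * y) 0) ^ 2 - 1)
      + w y * (max (-(1 - u * y)) 0) ^ 2) ∂ν
    + 2 * u * (b + lam * ∫ y, y ∂ν)

lemma gt_term1_integrable (ν : Measure ℝ) [IsProbabilityMeasure ν]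
    (hν0 : ∀ᵐ y ∂ν, 0 ≤ y) (ϱ : ℝ) (hϱ0 : 0 < ϱ)
    (Φ : ℝ → ℝ) (hΦm : Measurable Φ)
    (hΦ : ∀ᵐ y ∂ν, ϱ ≤ Real.exp (Φ y) ∧ Real.exp (Φ y) ≤ ϱ⁻¹)
    (u : ℝ) (hu : 0 ≤ u) :
    Integrable (fun y => Real.exp (Φ y) * ((max (1 - u * y) 0) ^ 2 - 1)) ν := by
  apply (integrable_const (ϱ⁻¹ : ℝ)).mono'
  · apply Measurable.aestronglyMeasurable
    exact (Real.measurable_exp.comp hΦm).mul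
      ((((measurable_const.sub (measurable_const.mul measurable_id)).max
        measurable_const).pow measurable_const).sub measurable_const)
  · filter_upwards [hν0, hΦ] with y hy hΦy
    have hm0 : 0 ≤ max (1 - u * y) 0 := le_max_right _ _
    have hm1 : max (1 - u * y) 0 ≤ 1 := by
      apply max_le _ zero_le_one
      nlinarith
    have he : 0 < Real.exp (Φ y) := Real.exp_pos _
    rw [Real.norm_eq_abs, abs_mul, Real.abs_exp]
    have : |(max (1 - u * y) 0) ^ 2 - 1| ≤ 1 := by
      rw [abs_le]; constructor <;> nlinarith
    nlinarith [hΦy.2]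

lemma gt_term2_integrable (ν : Measure ℝ) [IsProbabilityMeasure ν]
    (hν0 : ∀ᵐ y ∂ν, 0 ≤ y) (ϱ : ℝ) (hϱ0 : 0 < ϱ)
    (w : ℝ → ℝ) (hwm : Measurable w) (hw : ∀ᵐ y ∂ν, ϱ ≤ w y)
    (hwint : Integrable (fun y => w y * y ^ 2) ν)
    (u : ℝ) (hu : 0 ≤ u) :
    Integrable (fun y => w y * (max (-(1 - u * y)) 0) ^ 2) ν := by
  apply ((hwint.const_mul (u ^ 2)) : Integrable (fun y => u ^ 2 * (w y * y ^ 2)) ν).mono'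
  · apply Measurable.aestronglyMeasurable
    exact hwm.mul (((measurable_const.sub (measurable_const.mul measurable_id)).neg.max
      measurable_const).pow measurable_const)
  · filter_upwards [hν0, hw] with y hy hwy
    have hw0 : 0 < w y := lt_of_lt_of_le hϱ0 hwy
    have hm0 : 0 ≤ max (-(1 - u * y)) 0 := le_max_right _ _
    have hm1 : max (-(1 - u * y)) 0 ≤ u * y := by
      apply max_le _ (by positivity)
      nlinarith
    rw [Real.norm_eq_abs, abs_mul, abs_of_pos hw0, abs_of_nonneg (by positivity)]
    have h1 : (max (-(1 - u * y)) 0) ^ 2 ≤ (u * y) ^ 2 := pow_le_pow_left₀ hm0 hm1 2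
    nlinarith

lemma abs_csInf_sub_csInf {f g : ℝ → ℝ} {S : Set ℝ} (hS : S.Nonempty) {C m : ℝ}
    (hf : ∀ x ∈ S, m ≤ f x) (hg : ∀ x ∈ S, m ≤ g x)
    (h : ∀ x ∈ S, |f x - g x| ≤ C) :
    |sInf (f '' S) - sInf (g '' S)| ≤ C := by
  have hbf : BddBelow (f '' S) := ⟨m, by rintro _ ⟨x, hx, rfl⟩; exact hf x hx⟩
  have hbg : BddBelow (g '' S) := ⟨m, by rintro _ ⟨x, hx, rfl⟩; exact hg x hx⟩
  have H1 : sInf (f '' S) - C ≤ sInf (g '' S) := by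
    apply le_csInf (hS.image g)
    rintro _ ⟨x, hx, rfl⟩
    have h1 : sInf (f '' S) ≤ f x := csInf_le hbf ⟨x, hx, rfl⟩
    have h2 := (abs_le.mp (h x hx)).2
    linarith
  have H2 : sInf (g '' S) - C ≤ sInf (f '' S) := by
    apply le_csInf (hS.image f)
    rintro _ ⟨x, hx, rfl⟩
    have h1 : sInf (g '' S) ≤ g x := csInf_le hbg ⟨x, hx, rfl⟩
    have h2 := (abs_le.mp (h x hx)).1
    linarith
  rw [abs_sub_le_iff]
  constructor <;> linarith

set_option maxHeartbeats 1000000 in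
/-- under the stated bounds on `Φ, Φ̃, w`,
`|inf_{u≥0} G̃(u,w,Φ) − inf_{u≥0} G̃(u,w,Φ̃)| ≤ 2∫|e^{Φ} − e^{Φ̃}| λ dν
  ≤ 2ϱ⁻¹∫|Φ − Φ̃| λ dν`. -/
theorem stmt10 (ν : Measure ℝ) [IsProbabilityMeasure ν]
    (hν0 : ∀ᵐ y ∂ν, 0 ≤ y)
    (lam b : ℝ) (hlam : 0 < lam) (hb : 0 < b)
    (hy : Integrable (fun y => y) ν)
    (hy2 : Integrable (fun y => y ^ 2) ν)
    (hbY : 0 < ∫ y, y ∂ν) (hσY : 0 < ∫ y, y ^ 2 ∂ν)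
    (ϱ : ℝ) (hϱ0 : 0 < ϱ) (hϱ1 : ϱ < 1)
    (Φ Φ' w : ℝ → ℝ) (hΦm : Measurable Φ) (hΦ'm : Measurable Φ') (hwm : Measurable w)
    (hΦ : ∀ᵐ y ∂ν, ϱ ≤ Real.exp (Φ y) ∧ Real.exp (Φ y) ≤ ϱ⁻¹)
    (hΦ' : ∀ᵐ y ∂ν, ϱ ≤ Real.exp (Φ' y) ∧ Real.exp (Φ' y) ≤ ϱ⁻¹)
    (hw : ∀ᵐ y ∂ν, ϱ ≤ w y)
    (hwint : Integrable (fun y => w y * y ^ 2) ν) :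
    |sInf (Gt ν lam b w Φ '' Set.Ici 0) - sInf (Gt ν lam b w Φ' '' Set.Ici 0)|
        ≤ 2 * (lam * ∫ y, |Real.exp (Φ y) - Real.exp (Φ' y)| ∂ν) ∧
    2 * (lam * ∫ y, |Real.exp (Φ y) - Real.exp (Φ' y)| ∂ν)
        ≤ 2 * ϱ⁻¹ * (lam * ∫ y, |Φ y - Φ' y| ∂ν) := by
  have hϱinv : (0:ℝ) < ϱ⁻¹ := by positivity
  -- integrability of |e^Φ - e^Φ'|
  have habs_int : Integrable (fun y => |Real.exp (Φ y) - Real.exp (Φ' y)|) ν := by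
    apply (integrable_const (2 * ϱ⁻¹ : ℝ)).mono'
    · exact ((Real.measurable_exp.comp hΦm).sub (Real.measurable_exp.comp hΦ'm)).abs.aestronglyMeasurable
    · filter_upwards [hΦ, hΦ'] with y h1 h2
      rw [Real.norm_eq_abs, abs_abs, abs_sub_le_iff]
      constructor <;> nlinarith [Real.exp_pos (Φ y), Real.exp_pos (Φ' y), h1.1, h1.2, h2.1, h2.2]
  have habs_nonneg : 0 ≤ ∫ y, |Real.exp (Φ y) - Real.exp (Φ' y)| ∂ν :=
    integral_nonneg fun y => abs_nonneg _
  set C : ℝ := lam * ∫ y, |Real.exp (Φ y) - Real.exp (Φ' y)| ∂ν with hC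
  have hC0 : 0 ≤ C := by positivity
  constructor
  · -- first inequality
    have key : ∀ u ∈ Set.Ici (0:ℝ), |Gt ν lam b w Φ u - Gt ν lam b w Φ' u| ≤ C := by
      intro u hu
      simp only [Set.mem_Ici] at hu
      have hF : Integrable (fun y => Real.exp (Φ y) * ((max (1 - u * y) 0) ^ 2 - 1)
          + w y * (max (-(1 - u * y)) 0) ^ 2) ν :=
        (gt_term1_integrable ν hν0 ϱ hϱ0 Φ hΦm hΦ u hu).add
          (gt_term2_integrable ν hν0 ϱ hϱ0 w hwm hw hwint u hu)
      have hF' : Integrable (fun y => Real.exp (Φ' y) * ((max (1 - u * y) 0) ^ 2 - 1)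
          + w y * (max (-(1 - u * y)) 0) ^ 2) ν :=
        (gt_term1_integrable ν hν0 ϱ hϱ0 Φ' hΦ'm hΦ' u hu).add
          (gt_term2_integrable ν hν0 ϱ hϱ0 w hwm hw hwint u hu)
      have hdiff : Gt ν lam b w Φ u - Gt ν lam b w Φ' u
          = lam * ∫ y, ((Real.exp (Φ y) - Real.exp (Φ' y)) * ((max (1 - u * y) 0) ^ 2 - 1)) ∂ν := by
        rw [Gt, Gt]
        rw [show ∀ A B L : ℝ, lam * A + L - (lam * B + L) = lam * (A - B) by intros; ring]
        rw [← integral_sub hF hF']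
        congr 1
        apply integral_congr_ae
        filter_upwards with y
        ring
      rw [hdiff, hC, abs_mul, abs_of_pos hlam]
      apply mul_le_mul_of_nonneg_left _ hlam.le
      calc |∫ y, ((Real.exp (Φ y) - Real.exp (Φ' y)) * ((max (1 - u * y) 0) ^ 2 - 1)) ∂ν|
          ≤ ∫ y, |(Real.exp (Φ y) - Real.exp (Φ' y)) * ((max (1 - u * y) 0) ^ 2 - 1)| ∂ν := by
            exact abs_integral_le_integral_abs
        _ ≤ ∫ y, |Real.exp (Φ y) - Real.exp (Φ' y)| ∂ν := by
            apply integral_mono_of_nonneg (Filter.Eventually.of_forall fun y => abs_nonneg _) habs_int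
            filter_upwards [hν0] with y hy
            rw [abs_mul]
            have hm0 : 0 ≤ max (1 - u * y) 0 := le_max_right _ _
            have hm1 : max (1 - u * y) 0 ≤ 1 := by
              apply max_le _ zero_le_one; nlinarith
            have : |(max (1 - u * y) 0) ^ 2 - 1| ≤ 1 := by
              rw [abs_le]; constructor <;> nlinarith
            nlinarith [abs_nonneg (Real.exp (Φ y) - Real.exp (Φ' y))]
    -- lower bound for Gt
    have lb : ∀ (Ψ : ℝ → ℝ), Measurable Ψ →
        (∀ᵐ y ∂ν, ϱ ≤ Real.exp (Ψ y) ∧ Real.exp (Ψ y) ≤ ϱ⁻¹) →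
        ∀ u ∈ Set.Ici (0:ℝ), -(lam * ϱ⁻¹) ≤ Gt ν lam b w Ψ u := by
      intro Ψ hΨm hΨ u hu
      simp only [Set.mem_Ici] at hu
      have hF : Integrable (fun y => Real.exp (Ψ y) * ((max (1 - u * y) 0) ^ 2 - 1)
          + w y * (max (-(1 - u * y)) 0) ^ 2) ν :=
        (gt_term1_integrable ν hν0 ϱ hϱ0 Ψ hΨm hΨ u hu).add
          (gt_term2_integrable ν hν0 ϱ hϱ0 w hwm hw hwint u hu)
      have hint : -ϱ⁻¹ ≤ ∫ y, (Real.exp (Ψ y) * ((max (1 - u * y) 0) ^ 2 - 1)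
          + w y * (max (-(1 - u * y)) 0) ^ 2) ∂ν := by
        have := integral_mono_ae (integrable_const (-ϱ⁻¹ : ℝ)) hF ?_
        · simpa using this
        · filter_upwards [hν0, hΨ, hw] with y hy hΨy hwy
          have hm0 : 0 ≤ max (1 - u * y) 0 := le_max_right _ _
          have hm1 : max (1 - u * y) 0 ≤ 1 := by
            apply max_le _ zero_le_one; nlinarith
          have hn0 : 0 ≤ max (-(1 - u * y)) 0 := le_max_right _ _
          have he : 0 < Real.exp (Ψ y) := Real.exp_pos _
          have hw0 : 0 < w y := lt_of_lt_of_le hϱ0 hwy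
          have h1 : -ϱ⁻¹ ≤ Real.exp (Ψ y) * ((max (1 - u * y) 0) ^ 2 - 1) := by
            nlinarith [hΨy.2]
          nlinarith
      rw [Gt]
      have h2 : 0 ≤ 2 * u * (b + lam * ∫ y, y ∂ν) := by positivity
      nlinarith
    have := abs_csInf_sub_csInf (f := Gt ν lam b w Φ) (g := Gt ν lam b w Φ')
      (S := Set.Ici 0) (Set.nonempty_Ici) (lb Φ hΦm hΦ) (lb Φ' hΦ'm hΦ') key
    linarith
  · -- second inequality
    have hΦint : Integrable (fun y => ϱ⁻¹ * |Φ y - Φ' y|) ν := by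
      apply Integrable.const_mul
      apply (integrable_const (2 * |Real.log ϱ| : ℝ)).mono'
      · exact (hΦm.sub hΦ'm).abs.aestronglyMeasurable
      · filter_upwards [hΦ, hΦ'] with y h1 h2
        have hl : Real.log ϱ < 0 := Real.log_neg hϱ0 hϱ1
        have b1 : Real.log ϱ ≤ Φ y := by
          rw [← Real.log_exp (Φ y)]; exact Real.log_le_log hϱ0 h1.1
        have b2 : Φ y ≤ -Real.log ϱ := by
          rw [← Real.log_inv, ← Real.log_exp (Φ y)]
          exact Real.log_le_log (Real.exp_pos _) h1.2
        have b3 : Real.log ϱ ≤ Φ' y := by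
          rw [← Real.log_exp (Φ' y)]; exact Real.log_le_log hϱ0 h2.1
        have b4 : Φ' y ≤ -Real.log ϱ := by
          rw [← Real.log_inv, ← Real.log_exp (Φ' y)]
          exact Real.log_le_log (Real.exp_pos _) h2.2
        rw [Real.norm_eq_abs, abs_abs, abs_sub_le_iff, abs_of_neg hl]
        constructor <;> linarith
    have hmono : ∫ y, |Real.exp (Φ y) - Real.exp (Φ' y)| ∂ν
        ≤ ∫ y, ϱ⁻¹ * |Φ y - Φ' y| ∂ν := by
      apply integral_mono_of_nonneg (Filter.Eventually.of_forall fun y => abs_nonneg _) hΦint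
      filter_upwards [hΦ, hΦ'] with y h1 h2
      -- |e^a - e^b| ≤ ϱ⁻¹ |a - b|
      have key : ∀ a c : ℝ, Real.exp a ≤ ϱ⁻¹ → c ≤ a →
          Real.exp a - Real.exp c ≤ ϱ⁻¹ * (a - c) := by
        intro a c ha hca
        have h3 : (c - a) + 1 ≤ Real.exp (c - a) := Real.add_one_le_exp _
        have h4 : Real.exp a * Real.exp (c - a) = Real.exp c := by
          rw [← Real.exp_add]; ring_nf
        nlinarith [Real.exp_pos a]
      rcases le_total (Φ' y) (Φ y) with hle | hle
      · rw [abs_of_nonneg (by nlinarith [Real.exp_le_exp.mpr hle]),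
          abs_of_nonneg (by linarith)]
        exact key _ _ h1.2 hle
      · rw [abs_of_nonpos (by nlinarith [Real.exp_le_exp.mpr hle]),
          abs_of_nonpos (by linarith)]
        have := key _ _ h2.2 hle
        linarith
    rw [integral_const_mul] at hmono
    nlinarith
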